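/- Bailey's transform: if β_n = Σ_{r=0}^n α_r u_{n-r} v_{n+r} and γ_n = Σ_{r=n}^∞ δ_r u_{r-n} v_{r+n}, and all relevant series converge absolutely, then Σ_{n=0}^∞ α_n γ_n = Σ_{n=0}^∞ β_n δ_n. -/
import Mathlib


/-- Bailey's transform: if `β n = ∑_{r=0}^n α r * u (n-r) * v (n+r)` and
`γ n = ∑_{r=n}^∞ δ r * u (r-n) * v (r+n)` (here reindexed by `r = n + j`), and the
relevant double series converges absolutely, then `∑ α n γ n = ∑ β n δ n`. -/
theorem bailey_transform (α β γ δ u v : ℕ → ℂ)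
    (hβ : ∀ n, β n = ∑ r ∈ Finset.range (n + 1), α r * u (n - r) * v (n + r))
    (hγ : ∀ n, γ n = ∑' j : ℕ, δ (n + j) * u j * v (2 * n + j))
    (habs : Summable fun p : ℕ × ℕ => ‖α p.1 * δ (p.1 + p.2) * u p.2 * v (2 * p.1 + p.2)‖) :
    ∑' n, α n * γ n = ∑' n, β n * δ n := by
  classical
  set f : ℕ × ℕ → ℂ := fun p => α p.1 * δ (p.1 + p.2) * u p.2 * v (2 * p.1 + p.2) with hfdef
  have hf : Summable f := habs.of_norm
  set e : ℕ × ℕ → ℕ × ℕ := fun p => (p.1 + p.2, p.1) with hedef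
  have he : Function.Injective e := by
    intro a b h
    simp only [e, Prod.mk.injEq] at h
    exact Prod.ext h.2 (by omega)
  set g : ℕ × ℕ → ℂ := fun q =>
    if q.2 ≤ q.1 then α q.2 * u (q.1 - q.2) * v (q.1 + q.2) * δ q.1 else 0 with hgdef
  have hcomp : ∀ p : ℕ × ℕ, g (e p) = f p := by
    intro p
    have h1 : p.1 + p.2 - p.1 = p.2 := by omega
    have h2 : p.1 + p.2 + p.1 = 2 * p.1 + p.2 := by omega
    simp only [g, e, f, if_pos (Nat.le_add_right p.1 p.2), h1, h2]
    ring
  have hrange : Function.support g ⊆ Set.range e := by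
    intro q hq
    by_cases h : q.2 ≤ q.1
    · exact ⟨(q.2, q.1 - q.2), by simp only [e]; exact Prod.ext (by omega) rfl⟩
    · exact absurd (by simp [g, h]) hq
  have hge : ∀ q ∉ Set.range e, g q = 0 := fun q hq => by
    by_contra hne; exact hq (hrange hne)
  have hgsum : Summable g := by
    refine (he.summable_iff hge).mp ?_
    have : (g ∘ e) = f := funext hcomp
    rw [this]; exact hf
  -- LHS
  have hL : ∑' n, α n * γ n = ∑' p : ℕ × ℕ, f p := by
    rw [Summable.tsum_prod' hf fun b => ?_]
    · congr 1; funext n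
      rw [hγ n, ← tsum_mul_left]
      congr 1; funext j
      simp only [f]; ring
    · exact hf.comp_injective fun x y h => by simpa using h
  -- transfer to g
  have hM : ∑' p : ℕ × ℕ, f p = ∑' q : ℕ × ℕ, g q := by
    rw [← he.tsum_eq hrange]
    exact tsum_congr fun p => (hcomp p).symm
  -- RHS
  have hR : ∑' q : ℕ × ℕ, g q = ∑' n, β n * δ n := by
    rw [Summable.tsum_prod' hgsum fun m => ?_]
    · congr 1; funext m
      have h1 : ∑' r, g (m, r) = ∑ r ∈ Finset.range (m + 1), g (m, r) :=
        tsum_eq_sum fun r hr => by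
          have : ¬ r ≤ m := by simpa [Finset.mem_range, Nat.lt_succ_iff] using hr
          simp [g, this]
      rw [h1, hβ m, Finset.sum_mul]
      refine Finset.sum_congr rfl fun r hr => ?_
      have : r ≤ m := by
        have := Finset.mem_range.mp hr; omega
      simp [g, this]
    · exact hgsum.comp_injective fun x y h => by simpa using h
  rw [hL, hM, hR]
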